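/- Let q be a nonzero element of a field K and d ≥ 3 an integer. Suppose θ*_0,...,θ*_d are pairwise distinct elements of K satisfying (θ*_{i-2} - θ*_{i+1})/(θ*_{i-1} - θ*_i) = q^2 + q^{-2} + 1 for 2 ≤ i ≤ d-1, with q^2 + q^{-2} ≠ ±2. Then for all integers 0 ≤ i,j,r,s ≤ d with i + j = r + s, i ≠ j, r ≠ s, one has (θ*_i - θ*_j)/(θ*_r - θ*_s) = (q^{2i} - q^{2j})/(q^{2r} - q^{2s}), and the denominators are nonzero. -/

import Mathlib

open Finset

/-- ratio of differences of the θ's equals the corresponding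
ratio of differences of powers of q², with nonzero denominators. -/
theorem stmt8 {K : Type*} [Field K] (q : K) (hq : q ≠ 0)
    (d : ℕ) (hd : 3 ≤ d) (θ : ℕ → K)
    (hdist : ∀ i j : ℕ, i ≤ d → j ≤ d → θ i = θ j → i = j)
    (hratio : ∀ i : ℕ, 2 ≤ i → i ≤ d - 1 →
      (θ (i-2) - θ (i+1)) / (θ (i-1) - θ i) = q ^ 2 + q⁻¹ ^ 2 + 1)
    (hβ2 : q ^ 2 + q⁻¹ ^ 2 ≠ 2) (hβ2' : q ^ 2 + q⁻¹ ^ 2 ≠ -2) :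
    ∀ i j r s : ℕ, i ≤ d → j ≤ d → r ≤ d → s ≤ d →
      i + j = r + s → i ≠ j → r ≠ s →
      θ r - θ s ≠ 0 ∧ q ^ (2 * r) - q ^ (2 * s) ≠ 0 ∧
      (θ i - θ j) / (θ r - θ s) =
        (q ^ (2 * i) - q ^ (2 * j)) / (q ^ (2 * r) - q ^ (2 * s)) := by
  have h1 : q ^ 2 - 1 ≠ 0 := by
    intro h
    apply hβ2
    have hq2 : q ^ 2 = 1 := by linear_combination h
    rw [inv_pow, hq2, inv_one]; norm_num
  have h2 : q ^ 2 + 1 ≠ 0 := by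
    intro h
    apply hβ2'
    have hq2 : q ^ 2 = -1 := by linear_combination h
    rw [inv_pow, hq2]; norm_num
  have h4 : q ^ 4 - 1 ≠ 0 := by
    have e : q ^ 4 - 1 = (q ^ 2 - 1) * (q ^ 2 + 1) := by ring
    rw [e]; exact mul_ne_zero h1 h2
  -- solve for A, B such that Δ_k = A q^{2k} + B q^{-2k} for k = 1, 2
  obtain ⟨A, B, base1, base2⟩ :
      ∃ A B : K, θ 1 - θ 0 = A * q ^ 2 + B * q⁻¹ ^ 2 ∧
        θ 2 - θ 1 = A * q ^ 4 + B * q⁻¹ ^ 4 := by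
    refine ⟨((θ 2 - θ 1) * q ^ 2 - (θ 1 - θ 0)) / (q ^ 2 * (q ^ 4 - 1)),
            q ^ 4 * ((θ 1 - θ 0) * q ^ 2 - (θ 2 - θ 1)) / (q ^ 4 - 1), ?_, ?_⟩ <;>
      · rw [inv_pow]
        field_simp
        ring
  -- the recurrence identity on powers
  have key_pow : ∀ n : ℕ,
      (q ^ 2 + q⁻¹ ^ 2) * (A * q ^ (2*(n+2)) + B * q⁻¹ ^ (2*(n+2))) -
        (A * q ^ (2*(n+1)) + B * q⁻¹ ^ (2*(n+1))) =
      A * q ^ (2*(n+3)) + B * q⁻¹ ^ (2*(n+3)) := by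
    intro n
    have hqn : ∀ m : ℕ, q ^ m ≠ 0 := fun m => pow_ne_zero m hq
    simp only [inv_pow]
    field_simp [hqn]
    ring
  -- all differences Δ_k have the claimed form
  have hΔ : ∀ k : ℕ, 1 ≤ k → k ≤ d →
      θ k - θ (k-1) = A * q ^ (2*k) + B * q⁻¹ ^ (2*k) := by
    intro k
    induction k using Nat.strong_induction_on with
    | _ k ih =>
      intro h1k hkd
      rcases k with _ | _ | _ | m
      · omega
      · show θ 1 - θ 0 = A * q ^ (2*1) + B * q⁻¹ ^ (2*1)
        simpa using base1
      · show θ 2 - θ 1 = A * q ^ (2*2) + B * q⁻¹ ^ (2*2)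
        simpa using base2
      · have hd3 : m + 3 ≤ d := hkd
        have e2 : θ (m+2) - θ (m+1) = A * q ^ (2*(m+2)) + B * q⁻¹ ^ (2*(m+2)) :=
          ih (m+2) (by omega) (by omega) (by omega)
        have e1 : θ (m+1) - θ m = A * q ^ (2*(m+1)) + B * q⁻¹ ^ (2*(m+1)) :=
          ih (m+1) (by omega) (by omega) (by omega)
        have hne : θ (m+1) - θ (m+2) ≠ 0 := by
          refine sub_ne_zero.mpr fun h => ?_
          have := hdist (m+1) (m+2) (by omega) (by omega) h
          omega
        have hr := hratio (m+2) (by omega) (by omega)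
        rw [show m+2-2 = m from rfl, show m+2-1 = m+1 from rfl,
            show m+2+1 = m+3 from rfl, div_eq_iff hne] at hr
        show θ (m+3) - θ (m+2) = A * q ^ (2*(m+3)) + B * q⁻¹ ^ (2*(m+3))
        linear_combination -hr + (q ^ 2 + q⁻¹ ^ 2) * e2 - e1 + key_pow m
  -- the telescoping-step identity on powers
  have key_pow2 : ∀ i j : ℕ,
      (A * q ^ (2*(j+1)) + B * q⁻¹ ^ (2*(j+1))) +
        (q ^ (2*j) - q ^ (2*i)) * (A * q ^ 2 + B * q⁻¹ ^ (2*(i+j))) / (q ^ 2 - 1) =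
      (q ^ (2*(j+1)) - q ^ (2*i)) * (A * q ^ 2 + B * q⁻¹ ^ (2*(i+j+1))) / (q ^ 2 - 1) := by
    intro i j
    have hqn : ∀ m : ℕ, q ^ m ≠ 0 := fun m => pow_ne_zero m hq
    simp only [inv_pow]
    field_simp [hqn]
    ring
  -- closed form for θ_j - θ_i, i ≤ j
  have key : ∀ i j : ℕ, i ≤ j → j ≤ d →
      θ j - θ i = (q ^ (2*j) - q ^ (2*i)) * (A * q ^ 2 + B * q⁻¹ ^ (2*(i+j))) / (q ^ 2 - 1) := by
    intro i j hij
    induction j, hij using Nat.le_induction with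
    | base => intro _; simp
    | succ j hij ihj =>
      intro hjd
      have ih := ihj (by omega)
      have hdj : θ (j+1) - θ j = A * q ^ (2*(j+1)) + B * q⁻¹ ^ (2*(j+1)) :=
        hΔ (j+1) (by omega) hjd
      show θ (j+1) - θ i =
        (q ^ (2*(j+1)) - q ^ (2*i)) * (A * q ^ 2 + B * q⁻¹ ^ (2*(i+(j+1)))) / (q ^ 2 - 1)
      linear_combination hdj + ih + key_pow2 i j
  -- symmetric version
  have key2 : ∀ i j : ℕ, i ≤ d → j ≤ d →
      θ i - θ j = (q ^ (2*i) - q ^ (2*j)) * (A * q ^ 2 + B * q⁻¹ ^ (2*(i+j))) / (q ^ 2 - 1) := by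
    intro i j hi hj
    rcases le_total i j with h | h
    · linear_combination -(key i j h hj)
    · linear_combination key j i h hi
  intro i j r s hi hj hr hs hsum hij hrs
  have hθrs : θ r - θ s ≠ 0 := sub_ne_zero.mpr fun h => hrs (hdist r s hr hs h)
  have er := key2 r s hr hs
  have ei := key2 i j hi hj
  rw [hsum] at ei
  have hfac : (q ^ (2*r) - q ^ (2*s)) * (A * q ^ 2 + B * q⁻¹ ^ (2*(r+s))) / (q ^ 2 - 1) ≠ 0 :=
    er ▸ hθrs
  have hq2rs : q ^ (2*r) - q ^ (2*s) ≠ 0 := by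
    intro h0; apply hfac; rw [h0]; simp
  have hE : A * q ^ 2 + B * q⁻¹ ^ (2*(r+s)) ≠ 0 := by
    intro h0; apply hfac; rw [h0]; simp
  refine ⟨hθrs, hq2rs, ?_⟩
  have cancel : ∀ a b e c' : K, c' ≠ 0 → e ≠ 0 → b ≠ 0 →
      (a * e / c') / (b * e / c') = a / b := by
    intro a b e c' hc he hb
    field_simp
  rw [ei, er]
  exact cancel _ _ _ _ h1 hE hq2rs
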